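/- Let $r \in (0,1)$ and let $m$ be a positive integer. Then there exists a nondecreasing sequence $(d(n))_{n \geq 1}$ of positive integers such that $\lim_{n \to \infty} d(n) = \infty$ and $\prod_{n=1}^{\infty}\left(1 - \frac{m}{d(n)+m}\right) = r$. -/

import Mathlib

open Filter Topology

open Classical in
noncomputable def nextD (m : ℕ) (r P : ℝ) (prev : ℕ) : ℕ :=
  if h : ∃ k : ℕ, max prev 1 ≤ k ∧ r < P * ((k : ℝ) / ((k : ℝ) + m)) then Nat.find h else 1

lemma nextD_exists (m : ℕ) (hm : 0 < m) {r P : ℝ} (hr : 0 < r) (hP : r < P) (prev : ℕ) :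
    ∃ k : ℕ, max prev 1 ≤ k ∧ r < P * ((k : ℝ) / ((k : ℝ) + m)) := by
  obtain ⟨k, hk⟩ := exists_nat_gt (max ((max prev 1 : ℕ) : ℝ) (r * m / (P - r)))
  have hk1 : ((max prev 1 : ℕ) : ℝ) < k := (le_max_left _ _).trans_lt hk
  have hk2 : r * m / (P - r) < k := (le_max_right _ _).trans_lt hk
  have hPr : (0:ℝ) < P - r := sub_pos.2 hP
  have h1 : max prev 1 ≤ k := by exact_mod_cast hk1.le
  have hm' : (0:ℝ) < m := by exact_mod_cast hm
  have hk0 : (0:ℝ) ≤ k := Nat.cast_nonneg k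
  have hkm : (0:ℝ) < (k:ℝ) + m := by linarith
  refine ⟨k, h1, ?_⟩
  have h2 : r * m < k * (P - r) := (div_lt_iff₀ hPr).mp hk2
  rw [mul_div_assoc', lt_div_iff₀ hkm]
  nlinarith

noncomputable def gSeq (m : ℕ) (r : ℝ) : ℕ → ℕ × ℝ
  | 0 => (0, 1)
  | n + 1 =>
    let p := gSeq m r n
    let k := nextD m r p.2 p.1
    (k, p.2 * ((k : ℝ) / ((k : ℝ) + m)))

lemma gSeq_succ (m : ℕ) (r : ℝ) (n : ℕ) :
    gSeq m r (n + 1) =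
      ((nextD m r (gSeq m r n).2 (gSeq m r n).1),
        (gSeq m r n).2 * ((nextD m r (gSeq m r n).2 (gSeq m r n).1 : ℝ) /
          ((nextD m r (gSeq m r n).2 (gSeq m r n).1 : ℝ) + m))) := rfl

lemma gSeq_bounds (m : ℕ) (hm : 0 < m) {r : ℝ} (hr0 : 0 < r) (hr1 : r < 1) :
    ∀ n, r < (gSeq m r n).2 ∧ (gSeq m r n).2 ≤ 1 := by
  intro n
  induction n with
  | zero => exact ⟨hr1, le_refl 1⟩
  | succ n ih =>
    obtain ⟨h1, h2⟩ := ih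
    have hex := nextD_exists m hm hr0 h1 (gSeq m r n).1
    have hfind : nextD m r (gSeq m r n).2 (gSeq m r n).1 = Nat.find hex := by
      unfold nextD; rw [dif_pos hex]
    set k := nextD m r (gSeq m r n).2 (gSeq m r n).1 with hk
    have hspec := Nat.find_spec hex
    rw [← hfind] at hspec
    have hkm : (0:ℝ) < (k:ℝ) + m := by
      have : (0:ℝ) < m := by exact_mod_cast hm
      have := Nat.cast_nonneg (α := ℝ) k
      linarith
    have hfac1 : ((k:ℝ) / ((k:ℝ) + m)) ≤ 1 := by
      rw [div_le_one hkm]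
      have : (0:ℝ) < m := by exact_mod_cast hm
      linarith
    have hfac0 : (0:ℝ) ≤ ((k:ℝ) / ((k:ℝ) + m)) := by positivity
    rw [gSeq_succ, ← hk]
    constructor
    · exact hspec.2
    · calc (gSeq m r n).2 * ((k:ℝ) / ((k:ℝ) + m)) ≤ 1 * 1 := by
            apply mul_le_mul h2 hfac1 hfac0 (by norm_num)
        _ = 1 := by ring

lemma gSeq_step (m : ℕ) (hm : 0 < m) {r : ℝ} (hr0 : 0 < r) (hr1 : r < 1) (n : ℕ) :
    max (gSeq m r n).1 1 ≤ (gSeq m r (n + 1)).1 ∧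
    ∀ j < (gSeq m r (n + 1)).1, max (gSeq m r n).1 1 ≤ j →
      (gSeq m r n).2 * ((j:ℝ) / ((j:ℝ) + m)) ≤ r := by
  have h1 := (gSeq_bounds m hm hr0 hr1 n).1
  have hex := nextD_exists m hm hr0 h1 (gSeq m r n).1
  have hfind : nextD m r (gSeq m r n).2 (gSeq m r n).1 = Nat.find hex := by
    unfold nextD; rw [dif_pos hex]
  have hfst : (gSeq m r (n + 1)).1 = Nat.find hex := by rw [gSeq_succ]; exact hfind
  constructor
  · rw [hfst]; exact (Nat.find_spec hex).1
  · intro j hj hmax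
    rw [hfst] at hj
    have := Nat.find_min hex hj
    push_neg at this
    exact this hmax

/-- Let `r ∈ (0,1)` and let `m` be a positive integer. Then there exists a
nondecreasing sequence `(d n)` of positive integers tending to infinity such that
`∏_{n=1}^∞ (1 - m/(d n + m)) = r`, the infinite product being the limit of the partial
products. -/
theorem exists_seq_prod_eq (r : ℝ) (hr : r ∈ Set.Ioo (0 : ℝ) 1) (m : ℕ) (hm : 0 < m) :
    ∃ d : ℕ → ℕ, Monotone d ∧ (∀ n, 0 < d n) ∧ Tendsto d atTop atTop ∧
      Tendsto (fun N => ∏ n ∈ Finset.range N, (1 - (m : ℝ) / ((d n : ℝ) + m)))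
        atTop (𝓝 r) := by
  obtain ⟨hr0, hr1⟩ := hr
  have hm' : (0:ℝ) < m := by exact_mod_cast hm
  set d : ℕ → ℕ := fun n => (gSeq m r (n + 1)).1 with hd
  have hstep := gSeq_step m hm hr0 hr1
  have hbounds := gSeq_bounds m hm hr0 hr1
  have hpos : ∀ n, 0 < d n := fun n => lt_of_lt_of_le (by norm_num)
    (le_trans (le_max_right _ 1) (hstep n).1)
  have hmono : Monotone d := monotone_nat_of_le_succ fun n =>
    le_trans (le_max_left _ _) (hstep (n + 1)).1
  have hfst : ∀ N, d N = nextD m r (gSeq m r N).2 (gSeq m r N).1 := fun N => by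
    rw [hd]; simp only [gSeq_succ]
  have hP : ∀ N, (gSeq m r N).2 = ∏ n ∈ Finset.range N, ((d n : ℝ) / ((d n : ℝ) + m)) := by
    intro N
    induction N with
    | zero => simp [gSeq]
    | succ N ih =>
      rw [Finset.prod_range_succ, ← ih, gSeq_succ, ← hfst]
  -- unboundedness
  have hunb : ∀ b : ℕ, ∃ n, b ≤ d n := by
    by_contra hcon
    push_neg at hcon
    obtain ⟨b, hb⟩ := hcon
    have hb1 : (1:ℝ) ≤ b := by
      have h1 := hpos 0
      have h2 := hb 0
      have : 1 ≤ b := by omega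
      exact_mod_cast this
    set c : ℝ := (b : ℝ) / ((b : ℝ) + m) with hc
    have hbm : (0:ℝ) < (b:ℝ) + m := by linarith
    have hc0 : 0 ≤ c := by positivity
    have hc1 : c < 1 := by rw [hc, div_lt_one hbm]; linarith
    have hle : ∀ n, ((d n : ℝ) / ((d n : ℝ) + m)) ≤ c := by
      intro n
      have hdb : (d n : ℝ) ≤ b := by exact_mod_cast (hb n).le
      have hdm : (0:ℝ) < (d n : ℝ) + m := by positivity
      rw [hc, div_le_div_iff₀ hdm hbm]
      nlinarith [Nat.cast_nonneg (α := ℝ) (d n)]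
    have hrc : ∀ N, r < c ^ N := by
      intro N
      calc r < (gSeq m r N).2 := (hbounds N).1
        _ = ∏ n ∈ Finset.range N, ((d n : ℝ) / ((d n : ℝ) + m)) := hP N
        _ ≤ ∏ _n ∈ Finset.range N, c := by
            apply Finset.prod_le_prod (fun i _ => by positivity) (fun i _ => hle i)
        _ = c ^ N := by rw [Finset.prod_const, Finset.card_range]
    have htend := tendsto_pow_atTop_nhds_zero_of_lt_one hc0 hc1
    obtain ⟨N, hN⟩ := (htend.eventually (gt_mem_nhds hr0)).exists
    exact absurd (hrc N) (not_lt.2 hN.le)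
  have htd : Tendsto d atTop atTop := tendsto_atTop_atTop_of_monotone hmono fun b => hunb b
  -- antitone partial products
  have hanti : Antitone fun N => (gSeq m r N).2 := by
    apply antitone_nat_of_succ_le
    intro n
    rw [gSeq_succ]
    set k := nextD m r (gSeq m r n).2 (gSeq m r n).1
    have hkm : (0:ℝ) < (k:ℝ) + m := by positivity
    have hfac1 : ((k:ℝ) / ((k:ℝ) + m)) ≤ 1 := by rw [div_le_one hkm]; linarith
    exact mul_le_of_le_one_right (le_of_lt (lt_trans hr0 (hbounds n).1)) hfac1
  -- key epsilon estimate
  have hkey : ∀ ε : ℝ, 0 < ε → ∃ N, (gSeq m r N).2 ≤ r + ε := by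
    intro ε hε
    obtain ⟨K, hK⟩ := exists_nat_gt ((m : ℝ) / ε)
    have hKm : (m : ℝ) < ε * K := by
      rw [div_lt_iff₀ hε] at hK; linarith
    have hT := hunb (max (K + 1) 2)
    classical
    obtain ⟨n, hdn, hminn⟩ : ∃ n, max (K + 1) 2 ≤ d n ∧ ∀ n' < n, ¬ (max (K + 1) 2 ≤ d n') :=
      ⟨Nat.find hT, Nat.find_spec hT, fun n' h => Nat.find_min hT h⟩
    have hprev : (gSeq m r n).1 < d n := by
      rcases n with _ | n'
      · show (gSeq m r 0).1 < d 0
        simpa [gSeq] using hpos 0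
      · have hn' : ¬ max (K + 1) 2 ≤ d n' := hminn n' (Nat.lt_succ_self n')
        have : d n' < max (K + 1) 2 := lt_of_not_ge hn'
        exact lt_of_lt_of_le this hdn
    have h2 : 2 ≤ d n := le_trans (le_max_right _ _) hdn
    have hK1 : K + 1 ≤ d n := le_trans (le_max_left _ _) hdn
    set j := d n - 1 with hj
    have hj1 : 1 ≤ j := by omega
    have hjK : K ≤ j := by omega
    have hjlt : j < d n := by omega
    have hmax : max (gSeq m r n).1 1 ≤ j := max_le (by omega) hj1
    have hmin := (hstep n).2 j (by exact hjlt) hmax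
    have hjR : (1:ℝ) ≤ (j:ℝ) := by exact_mod_cast hj1
    have hjKR : (K:ℝ) ≤ (j:ℝ) := by exact_mod_cast hjK
    have hjm : (0:ℝ) < (j:ℝ) + m := by linarith
    have hPn := (hbounds n).2
    have hPn0 : 0 < (gSeq m r n).2 := lt_trans hr0 (hbounds n).1
    refine ⟨n + 1, ?_⟩
    have hstep1 : (gSeq m r (n+1)).2 ≤ (gSeq m r n).2 := hanti (Nat.le_succ n)
    have hbound : (gSeq m r n).2 ≤ r + ε := by
      have h1 : (gSeq m r n).2 * (j:ℝ) / ((j:ℝ) + m) ≤ r := by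
        rw [mul_div_assoc]; exact hmin
      rw [div_le_iff₀ hjm] at h1
      have hεj : ε * (K:ℝ) ≤ ε * (j:ℝ) := mul_le_mul_of_nonneg_left hjKR hε.le
      nlinarith [hjR, hr0.le, hε.le, hr1.le]
    linarith
  -- conclusion
  refine ⟨d, hmono, hpos, htd, ?_⟩
  have hfun : (fun N => ∏ n ∈ Finset.range N, (1 - (m : ℝ) / ((d n : ℝ) + m)))
      = fun N => (gSeq m r N).2 := by
    funext N
    rw [hP N]
    apply Finset.prod_congr rfl
    intro n _
    have hne : ((d n : ℝ) + m) ≠ 0 := by positivity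
    field_simp
    ring
  rw [hfun]
  apply tendsto_order.2
  constructor
  · intro a ha
    exact Filter.Eventually.of_forall fun N => ha.trans (hbounds N).1
  · intro a ha
    obtain ⟨N0, hN0⟩ := hkey ((a - r) / 2) (by linarith)
    filter_upwards [Filter.eventually_ge_atTop N0] with N hN
    exact lt_of_le_of_lt (hanti hN) (by linarith)
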